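/- arXiv:1312.2490 — 4 statements merged into one kernel-verified Lean document; each statement's English description precedes it below -/
import Mathlib

section
/- For every α_0 > 0, every 0 < δ < 1/3, and every probability distribution P on {0,1}^m, if α is chosen uniformly at random from the set {α_0(1+3δ)^i : 0 ≤ i ≤ ⌊1/δ⌋}, then E_α[ Pr_{y ← P}[ P(y) ∈ [(1-δ)α·2^{-m}, (1+δ)α·2^{-m}] ] ] ≤ δ. -/
open scoped BigOperators Classical

/-- choosing a random threshold. -/
theorem stmt_1 (m : ℕ) (P : (Fin m → Bool) → ℝ)
    (hP0 : ∀ y, 0 ≤ P y) (hP1 : ∑ y, P y = 1)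
    (α₀ δ : ℝ) (hα₀ : 0 < α₀) (hδ : 0 < δ) (hδ' : δ < 1/3) :
    (1 / ((⌊1/δ⌋₊ : ℝ) + 1)) *
      ∑ i ∈ Finset.range (⌊1/δ⌋₊ + 1),
        (∑ y ∈ Finset.univ.filter (fun y =>
            P y ∈ Set.Icc ((1 - δ) * (α₀ * (1 + 3*δ)^i) * ((2:ℝ)^m)⁻¹)
                          ((1 + δ) * (α₀ * (1 + 3*δ)^i) * ((2:ℝ)^m)⁻¹)), P y)
      ≤ δ := by
  set n := ⌊1/δ⌋₊ + 1 with hn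
  set cond : ℕ → (Fin m → Bool) → Prop := fun i y =>
      P y ∈ Set.Icc ((1 - δ) * (α₀ * (1 + 3*δ)^i) * ((2:ℝ)^m)⁻¹)
                    ((1 + δ) * (α₀ * (1 + 3*δ)^i) * ((2:ℝ)^m)⁻¹) with hcond
  have hinv : (0:ℝ) < ((2:ℝ)^m)⁻¹ := by positivity
  -- disjointness: at most one i can satisfy cond i y
  have hdisj : ∀ y i j, cond i y → cond j y → i = j := by
    intro y i j hi hj
    by_contra hne
    wlog hij : i < j generalizing i j
    · exact this j i hj hi (Ne.symm hne) (by omega)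
    have h1 : (1 - δ) * (α₀ * (1 + 3*δ)^j) * ((2:ℝ)^m)⁻¹ ≤
        (1 + δ) * (α₀ * (1 + 3*δ)^i) * ((2:ℝ)^m)⁻¹ := le_trans hj.1 hi.2
    have h2 : (1 - δ) * (α₀ * (1 + 3*δ)^j) ≤ (1 + δ) * (α₀ * (1 + 3*δ)^i) :=
      le_of_mul_le_mul_right (by linarith [h1]) hinv
    have hpow : (1 + 3*δ)^(i+1) ≤ (1 + 3*δ)^j :=
      pow_le_pow_right₀ (by linarith) hij
    have hpi : (0:ℝ) < (1 + 3*δ)^i := by positivity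
    have h2a : α₀ * ((1 - δ) * (1 + 3*δ)^j) ≤ α₀ * ((1 + δ) * (1 + 3*δ)^i) := by
      have e1 : α₀ * ((1 - δ) * (1 + 3*δ)^j) = (1 - δ) * (α₀ * (1 + 3*δ)^j) := by ring
      have e2 : α₀ * ((1 + δ) * (1 + 3*δ)^i) = (1 + δ) * (α₀ * (1 + 3*δ)^i) := by ring
      rw [e1, e2]; exact h2
    have h2b : (1 - δ) * (1 + 3*δ)^j ≤ (1 + δ) * (1 + 3*δ)^i :=
      le_of_mul_le_mul_left h2a hα₀
    have h4 : (1 - δ) * (1 + 3*δ)^(i+1) ≤ (1 - δ) * (1 + 3*δ)^j :=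
      mul_le_mul_of_nonneg_left hpow (by linarith)
    have h5 : (1 + 3*δ)^(i+1) = (1 + 3*δ)^i * (1 + 3*δ) := pow_succ _ _
    nlinarith [mul_pos hpi (show (0:ℝ) < δ - 3*δ*δ by nlinarith)]
  -- sum over i of filtered sums ≤ 1
  have key : ∑ i ∈ Finset.range n,
      (∑ y ∈ Finset.univ.filter (fun y => cond i y), P y) ≤ 1 := by
    have := Finset.sum_comm (s := Finset.range n) (t := (Finset.univ : Finset (Fin m → Bool)))
      (f := fun i y => if cond i y then P y else 0)
    calc ∑ i ∈ Finset.range n, (∑ y ∈ Finset.univ.filter (fun y => cond i y), P y)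
        = ∑ i ∈ Finset.range n, ∑ y, (if cond i y then P y else 0) := by
          refine Finset.sum_congr rfl fun i _ => ?_
          rw [Finset.sum_filter]
      _ = ∑ y, ∑ i ∈ Finset.range n, (if cond i y then P y else 0) := this
      _ ≤ ∑ y, P y := by
          refine Finset.sum_le_sum fun y _ => ?_
          rw [← Finset.sum_filter]
          have hcard : ((Finset.range n).filter (fun i => cond i y)).card ≤ 1 := by
            refine Finset.card_le_one.2 fun a ha b hb => ?_
            exact hdisj y a b (Finset.mem_filter.1 ha).2 (Finset.mem_filter.1 hb).2
          rw [Finset.sum_const]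
          calc (((Finset.range n).filter (fun i => cond i y)).card : ℕ) • P y
              ≤ 1 • P y := smul_le_smul_of_nonneg_right hcard (hP0 y)
            _ = P y := one_smul _ _
      _ = 1 := hP1
  -- 1/n < δ
  have hnpos : (0:ℝ) < (⌊1/δ⌋₊ : ℝ) + 1 := by positivity
  have hfloor : 1/δ < (⌊1/δ⌋₊ : ℝ) + 1 := Nat.lt_floor_add_one _
  have hinvn : 1 / ((⌊1/δ⌋₊ : ℝ) + 1) ≤ δ := by
    rw [div_le_iff₀ hnpos]
    have : 1 / δ * δ = 1 := by field_simp
    nlinarith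
  have hsum_nonneg : 0 ≤ ∑ i ∈ Finset.range n,
      (∑ y ∈ Finset.univ.filter (fun y => cond i y), P y) := by
    refine Finset.sum_nonneg fun i _ => Finset.sum_nonneg fun y _ => hP0 y
  calc (1 / ((⌊1/δ⌋₊ : ℝ) + 1)) * ∑ i ∈ Finset.range n,
        (∑ y ∈ Finset.univ.filter (fun y => cond i y), P y)
      ≤ (1 / ((⌊1/δ⌋₊ : ℝ) + 1)) * 1 := by
        apply mul_le_mul_of_nonneg_left key (by positivity)
    _ = 1 / ((⌊1/δ⌋₊ : ℝ) + 1) := mul_one _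
    _ ≤ δ := hinvn
end

section
/- Let t ∈ ℕ, let ε̃ > 0, let j* ∈ {0,...,t}, and let d = (d_0,...,d_t) ∈ ℝ^{t+1}. Suppose (i) Σ_{j ≤ j*} d_j ∈ [-δ, δ], and (ii) (1/(t+1)) Σ_{i=0}^{t} |Σ_{j ≤ i} d_j| ≤ 20/t. If moreover 2^{j* ε̃} ≤ 2^m, then Σ_{j ≤ j*} d_j 2^{j ε̃} ≤ (δ + 40 ε̃) · 2^m and Σ_{j ≤ j*} d_j 2^{j ε̃} ≥ -(δ + 40 ε̃) · 2^m. -/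
open scoped BigOperators

lemma exp_sub_one_le (y : ℝ) : Real.exp y - 1 ≤ y * Real.exp y := by
  have h := Real.add_one_le_exp (-y)
  have hprod : Real.exp y * Real.exp (-y) = 1 := by
    rw [← Real.exp_add]; simp
  nlinarith [mul_le_mul_of_nonneg_left h (Real.exp_pos y).le]

lemma rpow_sub_one_le {x : ℝ} (hx : 0 ≤ x) : (2:ℝ)^x - 1 ≤ x * (2:ℝ)^x := by
  rw [Real.rpow_def_of_pos two_pos]
  have hlog : Real.log 2 ≤ 1 := by
    have := Real.log_le_sub_one_of_pos (by norm_num : (0:ℝ) < 2)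
    linarith
  have hlogpos : 0 < Real.log 2 := Real.log_pos (by norm_num)
  have h := exp_sub_one_le (Real.log 2 * x)
  have h2 := Real.exp_pos (Real.log 2 * x)
  nlinarith [mul_nonneg (mul_nonneg (sub_nonneg.mpr hlog) hx) h2.le]

/-- core lemma bounding the weighted prefix sum. -/
theorem stmt_4 (t m : ℕ) (ht : 1 ≤ t) (εt δ : ℝ) (hεt : 0 < εt) (hδ : 0 ≤ δ)
    (jstar : ℕ) (hjstar : jstar ≤ t) (d : ℕ → ℝ)
    (h1 : ∑ j ∈ Finset.range (jstar + 1), d j ∈ Set.Icc (-δ) δ)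
    (h2 : (1/((t:ℝ)+1)) * ∑ i ∈ Finset.range (t+1),
            |∑ j ∈ Finset.range (i+1), d j| ≤ 20 / t)
    (hm : (2:ℝ) ^ ((jstar : ℝ) * εt) ≤ (2:ℝ)^m) :
    (∑ j ∈ Finset.range (jstar + 1), d j * (2:ℝ) ^ ((j:ℝ) * εt))
        ≤ (δ + 40 * εt) * (2:ℝ)^m ∧
    -((δ + 40 * εt) * (2:ℝ)^m) ≤
      ∑ j ∈ Finset.range (jstar + 1), d j * (2:ℝ) ^ ((j:ℝ) * εt) := by
  set w : ℕ → ℝ := fun j => (2:ℝ)^((j:ℝ)*εt) with hw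
  set S : ℕ → ℝ := fun i => ∑ j ∈ Finset.range i, d j with hS
  -- positivity / monotonicity of weights
  have hwpos : ∀ j, 0 < w j := fun j => Real.rpow_pos_of_pos two_pos _
  have hwmono : ∀ {a b : ℕ}, a ≤ b → w a ≤ w b := by
    intro a b hab
    exact Real.rpow_le_rpow_of_exponent_le (by norm_num)
      (mul_le_mul_of_nonneg_right (by exact_mod_cast hab) hεt.le)
  have hwm : ∀ j ≤ jstar, w j ≤ (2:ℝ)^m := fun j hj => le_trans (hwmono hj) hm
  -- total prefix abs sum ≤ 40
  have htpos : (0:ℝ) < t := by exact_mod_cast ht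
  have hA : ∑ i ∈ Finset.range (t+1), |S (i+1)| ≤ 40 := by
    have h2' : ∑ i ∈ Finset.range (t+1), |S (i+1)| ≤ 20 / t * ((t:ℝ)+1) := by
      have := mul_le_mul_of_nonneg_right h2 (by positivity : (0:ℝ) ≤ (t:ℝ)+1)
      calc ∑ i ∈ Finset.range (t+1), |S (i+1)|
          = (1/((t:ℝ)+1)) * (∑ i ∈ Finset.range (t+1), |S (i+1)|) * ((t:ℝ)+1) := by
            field_simp
        _ ≤ 20 / t * ((t:ℝ)+1) := this
    have : 20 / (t:ℝ) * ((t:ℝ)+1) ≤ 40 := by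
      rw [div_mul_eq_mul_div, div_le_iff₀ htpos]
      have : (1:ℝ) ≤ t := by exact_mod_cast ht
      nlinarith
    linarith
  -- weight increments
  have hwsucc : ∀ i : ℕ, w (i+1) = w i * (2:ℝ)^εt := by
    intro i
    simp only [hw]
    rw [← Real.rpow_add two_pos]
    congr 1
    push_cast
    ring
  have hstep : ∀ i, i < jstar → w (i+1) - w i ≤ εt * (2:ℝ)^m := by
    intro i hi
    have h2' : (2:ℝ)^εt - 1 ≤ εt * (2:ℝ)^εt := rpow_sub_one_le hεt.le
    calc w (i+1) - w i = w i * ((2:ℝ)^εt - 1) := by rw [hwsucc i]; ring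
      _ ≤ w i * (εt * (2:ℝ)^εt) := by
          exact mul_le_mul_of_nonneg_left h2' (hwpos i).le
      _ = εt * (w i * (2:ℝ)^εt) := by ring
      _ = εt * w (i+1) := by rw [hwsucc i]
      _ ≤ εt * (2:ℝ)^m := mul_le_mul_of_nonneg_left (hwm (i+1) hi) hεt.le
  have hstepnn : ∀ i, 0 ≤ w (i+1) - w i := fun i => sub_nonneg.mpr (hwmono (Nat.le_succ i))
  -- Abel summation
  have habel : ∑ j ∈ Finset.range (jstar+1), d j * w j
      = w jstar * S (jstar+1) - ∑ i ∈ Finset.range jstar, (w (i+1) - w i) * S (i+1) := by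
    have := Finset.sum_range_by_parts w d (jstar+1)
    simp only [smul_eq_mul, Nat.add_sub_cancel] at this
    calc ∑ j ∈ Finset.range (jstar+1), d j * w j
        = ∑ j ∈ Finset.range (jstar+1), w j * d j := by
          apply Finset.sum_congr rfl; intros; ring
      _ = w jstar * S (jstar+1) - ∑ i ∈ Finset.range jstar, (w (i+1) - w i) * S (i+1) := this
  -- bound the correction sum
  have hcorr : |∑ i ∈ Finset.range jstar, (w (i+1) - w i) * S (i+1)| ≤ 40 * εt * (2:ℝ)^m := by
    calc |∑ i ∈ Finset.range jstar, (w (i+1) - w i) * S (i+1)|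
        ≤ ∑ i ∈ Finset.range jstar, |(w (i+1) - w i) * S (i+1)| :=
          Finset.abs_sum_le_sum_abs _ _
      _ = ∑ i ∈ Finset.range jstar, (w (i+1) - w i) * |S (i+1)| := by
          apply Finset.sum_congr rfl; intro i _
          rw [abs_mul, abs_of_nonneg (hstepnn i)]
      _ ≤ ∑ i ∈ Finset.range jstar, (εt * (2:ℝ)^m) * |S (i+1)| := by
          apply Finset.sum_le_sum; intro i hi
          exact mul_le_mul_of_nonneg_right (hstep i (Finset.mem_range.mp hi)) (abs_nonneg _)
      _ = (εt * (2:ℝ)^m) * ∑ i ∈ Finset.range jstar, |S (i+1)| := by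
          rw [Finset.mul_sum]
      _ ≤ (εt * (2:ℝ)^m) * ∑ i ∈ Finset.range (t+1), |S (i+1)| := by
          apply mul_le_mul_of_nonneg_left _ (by positivity)
          apply Finset.sum_le_sum_of_subset_of_nonneg
          · exact Finset.range_subset_range.mpr (by omega)
          · intros; exact abs_nonneg _
      _ ≤ (εt * (2:ℝ)^m) * 40 := mul_le_mul_of_nonneg_left hA (by positivity)
      _ = 40 * εt * (2:ℝ)^m := by ring
  -- main bound
  obtain ⟨hlo, hhi⟩ := h1
  have hS1 : |S (jstar+1)| ≤ δ := abs_le.mpr ⟨hlo, hhi⟩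
  have hmain : |∑ j ∈ Finset.range (jstar+1), d j * w j| ≤ (δ + 40 * εt) * (2:ℝ)^m := by
    rw [habel]
    calc |w jstar * S (jstar+1) - ∑ i ∈ Finset.range jstar, (w (i+1) - w i) * S (i+1)|
        ≤ |w jstar * S (jstar+1)| + |∑ i ∈ Finset.range jstar, (w (i+1) - w i) * S (i+1)| :=
          abs_sub _ _
      _ ≤ δ * (2:ℝ)^m + 40 * εt * (2:ℝ)^m := by
          apply add_le_add _ hcorr
          rw [abs_mul, abs_of_pos (hwpos jstar)]
          calc w jstar * |S (jstar+1)| ≤ (2:ℝ)^m * δ :=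
                mul_le_mul (hwm jstar le_rfl) hS1 (abs_nonneg _) (by positivity)
            _ = δ * (2:ℝ)^m := by ring
      _ = (δ + 40 * εt) * (2:ℝ)^m := by ring
  exact ⟨(abs_le.mp hmain).2, (abs_le.mp hmain).1⟩
end

section
/- Let d = (d_0,...,d_t) ∈ ℝ^{t+1} and j* ≤ t. Define d' ∈ ℝ^{t+1} as the unique vector such that for all i < j*, Σ_{j≤i} d'_j = min{Σ_{j≤i} d_j, 0}, and Σ_{j≤j*} d'_j = Σ_{j≤j*} d_j, and d'_j = d_j for j > j*. Then: (1) for all i ∈ {0,...,t}, |Σ_{j≤i} d'_j| ≤ |Σ_{j≤i} d_j|, and (2) Σ_{j≤j*} d'_j 2^{jε̃} ≥ Σ_{j≤j*} d_j 2^{jε̃} for any ε̃ > 0. -/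
open scoped BigOperators

/-- properties of the truncated-prefix-sum vector `d'`. -/
theorem stmt_5 (t : ℕ) (jstar : ℕ) (hjstar : jstar ≤ t)
    (εt : ℝ) (hεt : 0 < εt) (d d' : ℕ → ℝ)
    (hlt : ∀ i < jstar,
      ∑ j ∈ Finset.range (i+1), d' j = min (∑ j ∈ Finset.range (i+1), d j) 0)
    (heq : ∑ j ∈ Finset.range (jstar+1), d' j = ∑ j ∈ Finset.range (jstar+1), d j)
    (hgt : ∀ j, jstar < j → d' j = d j) :
    (∀ i ≤ t, |∑ j ∈ Finset.range (i+1), d' j| ≤ |∑ j ∈ Finset.range (i+1), d j|) ∧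
    ∑ j ∈ Finset.range (jstar+1), d j * (2:ℝ) ^ ((j:ℝ) * εt) ≤
      ∑ j ∈ Finset.range (jstar+1), d' j * (2:ℝ) ^ ((j:ℝ) * εt) := by
  have key : ∀ i, jstar ≤ i →
      ∑ j ∈ Finset.range (i+1), d' j = ∑ j ∈ Finset.range (i+1), d j := by
    intro i hi
    induction i, hi using Nat.le_induction with
    | base => exact heq
    | succ n hn ih =>
      rw [Finset.sum_range_succ d' (n+1), Finset.sum_range_succ d (n+1), ih, hgt _ (Nat.lt_succ_of_le hn)]
  constructor
  · intro i _
    rcases lt_or_ge i jstar with h | h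
    · rw [hlt i h]
      rcases le_total (∑ j ∈ Finset.range (i+1), d j) 0 with hs | hs
      · rw [min_eq_left hs]
      · rw [min_eq_right hs, abs_zero]; exact abs_nonneg _
    · rw [key i h]
  · set w : ℕ → ℝ := fun j => (2:ℝ) ^ ((j:ℝ) * εt) with hw
    have hmono : ∀ i : ℕ, w i ≤ w (i+1) := by
      intro i
      apply Real.rpow_le_rpow_left_iff (x := 2) (by norm_num) |>.mpr
      have : ((i:ℝ)) ≤ ((i:ℝ)+1) := by linarith
      push_cast
      nlinarith
    have habel : ∀ g : ℕ → ℝ,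
        ∑ j ∈ Finset.range (jstar+1), g j * w j =
          w jstar * (∑ j ∈ Finset.range (jstar+1), g j) -
          ∑ i ∈ Finset.range jstar, (w (i+1) - w i) * (∑ j ∈ Finset.range (i+1), g j) := by
      intro g
      have := Finset.sum_range_by_parts w g (jstar+1)
      simp only [smul_eq_mul, Nat.add_sub_cancel] at this
      calc ∑ j ∈ Finset.range (jstar+1), g j * w j
          = ∑ j ∈ Finset.range (jstar+1), w j * g j := by
            exact Finset.sum_congr rfl fun j _ => mul_comm _ _
        _ = _ := this
    rw [habel d, habel d']
    rw [heq]
    apply sub_le_sub_left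
    apply Finset.sum_le_sum
    intro i hi
    have hi' : i < jstar := Finset.mem_range.mp hi
    apply mul_le_mul_of_nonneg_left _ (by linarith [hmono i])
    rw [hlt i hi']
    exact min_le_left _ _
end

section
/- Let v^{(1)},...,v^{(s)} ∈ ℝ^{t+1} where each v^{(a)} has exactly two nonzero entries: v^{(a)}_{i(a)} = -w_a and v^{(a)}_{i'(a)} = w_a with w_a > 0 and i(a) < i'(a) ≤ j* ≤ t. Let d'' = Σ_a v^{(a)} and suppose Σ_{j≤i} d''_j ≤ 0 for all i and (1/(t+1))Σ_{i=0}^t |Σ_{j≤i} d''_j| ≤ 20/t. Then Σ_{j≤j*} d''_j 2^{jε̃} ≤ 40 ε̃ · 2^{j* ε̃} for any ε̃ ∈ (0,1]. -/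
open scoped BigOperators

/-- bounding the weighted sum of a transport decomposition. -/
theorem stmt_7 (t jstar m : ℕ) (ht : 1 ≤ t) (hjstar : jstar ≤ t)
    (εt : ℝ) (hεt0 : 0 < εt) (hεt1 : εt ≤ 1)
    (s : ℕ) (v : Fin s → ℕ → ℝ) (ia i'a : Fin s → ℕ) (w : Fin s → ℝ)
    (hv : ∀ a : Fin s,
        ia a < i'a a ∧ i'a a ≤ jstar ∧ 0 < w a ∧
        v a (ia a) = -(w a) ∧ v a (i'a a) = w a ∧
        ∀ j, j ≠ ia a → j ≠ i'a a → v a j = 0)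
    (d'' : ℕ → ℝ) (hd : ∀ j, d'' j = ∑ a, v a j)
    (hprefix : ∀ i, ∑ j ∈ Finset.range (i+1), d'' j ≤ 0)
    (havg : (1/((t:ℝ)+1)) * ∑ i ∈ Finset.range (t+1),
              |∑ j ∈ Finset.range (i+1), d'' j| ≤ 20 / t) :
    ∑ j ∈ Finset.range (jstar+1), d'' j * (2:ℝ) ^ ((j:ℝ) * εt)
      ≤ 40 * εt * (2:ℝ) ^ ((jstar:ℝ) * εt) := by
  -- per-a prefix sums
  have hpre : ∀ a : Fin s, ∀ i, ∑ j ∈ Finset.range (i+1), v a j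
      = if ia a ≤ i ∧ i < i'a a then -(w a) else 0 := by
    intro a i
    obtain ⟨hlt, hle, hw, hvi, hvi', hz⟩ := hv a
    by_cases h1 : i < ia a
    · rw [if_neg (by omega)]
      apply Finset.sum_eq_zero
      intro j hj
      simp only [Finset.mem_range] at hj
      exact hz j (by omega) (by omega)
    · by_cases h2 : i < i'a a
      · rw [if_pos ⟨by omega, h2⟩]
        have he : ∑ j ∈ Finset.range (i+1), v a j = ∑ j ∈ ({ia a} : Finset ℕ), v a j := by
          refine (Finset.sum_subset ?_ ?_).symm
          · intro x hx
            simp only [Finset.mem_singleton] at hx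
            simp only [Finset.mem_range]; omega
          · intro x hx hx'
            simp only [Finset.mem_range] at hx
            simp only [Finset.mem_singleton] at hx'
            exact hz x hx' (by omega)
        rw [he, Finset.sum_singleton, hvi]
      · rw [if_neg (by omega)]
        have he : ∑ j ∈ Finset.range (i+1), v a j
            = ∑ j ∈ ({ia a, i'a a} : Finset ℕ), v a j := by
          refine (Finset.sum_subset ?_ ?_).symm
          · intro x hx
            simp only [Finset.mem_insert, Finset.mem_singleton] at hx
            simp only [Finset.mem_range]; omega
          · intro x hx hx'
            simp only [Finset.mem_insert, Finset.mem_singleton, not_or] at hx'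
            exact hz x hx'.1 hx'.2
        rw [he, Finset.sum_pair (by omega : ia a ≠ i'a a), hvi, hvi']; ring
  -- total mass bound
  have hmass : ∑ a : Fin s, w a * ((i'a a : ℝ) - (ia a : ℝ)) ≤ 40 := by
    have hS : ∑ i ∈ Finset.range (t+1), |∑ j ∈ Finset.range (i+1), d'' j|
        = ∑ a : Fin s, w a * ((i'a a : ℝ) - (ia a : ℝ)) := by
      have h1 : ∀ i ∈ Finset.range (t+1), |∑ j ∈ Finset.range (i+1), d'' j|
          = -∑ j ∈ Finset.range (i+1), d'' j := fun i _ => abs_of_nonpos (hprefix i)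
      rw [Finset.sum_congr rfl h1]
      have h2 : ∀ i, ∑ j ∈ Finset.range (i+1), d'' j
          = ∑ a : Fin s, (if ia a ≤ i ∧ i < i'a a then -(w a) else 0) := by
        intro i
        simp only [hd]
        rw [Finset.sum_comm]
        exact Finset.sum_congr rfl (fun a _ => hpre a i)
      have h2' : ∀ i, -∑ j ∈ Finset.range (i+1), d'' j
          = ∑ a : Fin s, (if ia a ≤ i ∧ i < i'a a then (w a) else 0) := by
        intro i
        rw [h2 i, ← Finset.sum_neg_distrib]
        refine Finset.sum_congr rfl (fun a _ => ?_)
        split <;> simp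
      rw [Finset.sum_congr rfl (fun i _ => h2' i), Finset.sum_comm]
      refine Finset.sum_congr rfl (fun a _ => ?_)
      obtain ⟨hlt, hle, hw, _, _, _⟩ := hv a
      rw [Finset.sum_ite, Finset.sum_const_zero, add_zero, Finset.sum_const]
      have h4 : Finset.filter (fun i => ia a ≤ i ∧ i < i'a a) (Finset.range (t+1))
          = Finset.Ico (ia a) (i'a a) := by
        ext x
        simp only [Finset.mem_filter, Finset.mem_range, Finset.mem_Ico]
        omega
      rw [h4, Nat.card_Ico, nsmul_eq_mul]
      push_cast [Nat.cast_sub hlt.le]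
      ring
    have ht' : (0:ℝ) < t := by positivity
    have ht1 : (0:ℝ) < (t:ℝ) + 1 := by positivity
    rw [hS] at havg
    have h5 : ∑ a : Fin s, w a * ((i'a a : ℝ) - (ia a : ℝ)) ≤ (20 / t) * ((t:ℝ)+1) := by
      rw [div_mul_eq_mul_div, le_div_iff₀ ht']
      calc (∑ a : Fin s, w a * ((i'a a : ℝ) - (ia a : ℝ))) * t
          = ((1/((t:ℝ)+1)) * ∑ a : Fin s, w a * ((i'a a : ℝ) - (ia a : ℝ))) * (((t:ℝ)+1) * t) := by
            field_simp
        _ ≤ (20 / t) * (((t:ℝ)+1) * t) := by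
            apply mul_le_mul_of_nonneg_right havg; positivity
        _ = 20 * ((t:ℝ)+1) := by field_simp
    have ht2 : ((t:ℝ)+1) ≤ 2 * t := by
      have : (1:ℝ) ≤ t := by exact_mod_cast ht
      linarith
    calc ∑ a : Fin s, w a * ((i'a a : ℝ) - (ia a : ℝ))
        ≤ (20 / t) * ((t:ℝ)+1) := h5
      _ ≤ (20 / t) * (2 * t) := by
          apply mul_le_mul_of_nonneg_left ht2; positivity
      _ = 40 := by field_simp; ring
  -- weighted sum per a
  have hws : ∀ a : Fin s, ∑ j ∈ Finset.range (jstar+1), v a j * (2:ℝ) ^ ((j:ℝ) * εt)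
      = w a * (2:ℝ) ^ (((i'a a : ℝ)) * εt) - w a * (2:ℝ) ^ (((ia a : ℝ)) * εt) := by
    intro a
    obtain ⟨hlt, hle, hw, hvi, hvi', hz⟩ := hv a
    have he : ∑ j ∈ Finset.range (jstar+1), v a j * (2:ℝ) ^ ((j:ℝ) * εt)
        = ∑ j ∈ ({ia a, i'a a} : Finset ℕ), v a j * (2:ℝ) ^ ((j:ℝ) * εt) := by
      refine (Finset.sum_subset ?_ ?_).symm
      · intro x hx
        simp only [Finset.mem_insert, Finset.mem_singleton] at hx
        simp only [Finset.mem_range]; omega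
      · intro x hx hx'
        simp only [Finset.mem_insert, Finset.mem_singleton, not_or] at hx'
        rw [hz x hx'.1 hx'.2, zero_mul]
    rw [he, Finset.sum_pair (by omega : ia a ≠ i'a a), hvi, hvi']; ring
  -- per-a analytic bound
  have hkey : ∀ a : Fin s,
      w a * (2:ℝ) ^ (((i'a a : ℝ)) * εt) - w a * (2:ℝ) ^ (((ia a : ℝ)) * εt)
      ≤ εt * (w a * ((i'a a : ℝ) - (ia a : ℝ))) * (2:ℝ) ^ ((jstar:ℝ) * εt) := by
    intro a
    obtain ⟨hlt, hle, hw, _, _, _⟩ := hv a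
    set n : ℝ := (i'a a : ℝ) - (ia a : ℝ) with hn
    have hn0 : 0 < n := by
      have : (ia a : ℝ) < (i'a a : ℝ) := by exact_mod_cast hlt
      simpa [hn] using sub_pos.mpr this
    have hmono : (2:ℝ) ^ (((i'a a : ℝ)) * εt) ≤ (2:ℝ) ^ ((jstar:ℝ) * εt) := by
      apply Real.rpow_le_rpow_of_exponent_le one_le_two
      have : (i'a a : ℝ) ≤ (jstar : ℝ) := by exact_mod_cast hle
      nlinarith
    -- 2^{iε} = 2^{i'ε} * 2^{-nε} and 2^{-nε} ≥ 1 - nε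
    have hsplit : (2:ℝ) ^ (((ia a : ℝ)) * εt)
        = (2:ℝ) ^ (((i'a a : ℝ)) * εt) * (2:ℝ) ^ (-(n * εt)) := by
      rw [← Real.rpow_add (by norm_num : (0:ℝ) < 2)]
      congr 1; simp [hn]; ring
    have hexp : (1:ℝ) - n * εt ≤ (2:ℝ) ^ (-(n * εt)) := by
      rw [Real.rpow_def_of_pos (by norm_num : (0:ℝ) < 2), mul_comm (Real.log 2)]
      have h1 := Real.add_one_le_exp (-(n * εt) * Real.log 2)
      have hlog : Real.log 2 ≤ 1 := by
        have := Real.log_le_sub_one_of_pos (by norm_num : (0:ℝ) < 2)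
        linarith
      have hlog0 : 0 < Real.log 2 := Real.log_pos (by norm_num)
      nlinarith [mul_nonneg hn0.le hεt0.le]
    have hP : 0 < (2:ℝ) ^ (((i'a a : ℝ)) * εt) := Real.rpow_pos_of_pos (by norm_num) _
    have hstep : (2:ℝ) ^ (((i'a a : ℝ)) * εt) - (2:ℝ) ^ (((ia a : ℝ)) * εt)
        ≤ (2:ℝ) ^ (((i'a a : ℝ)) * εt) * (n * εt) := by
      rw [hsplit]
      nlinarith
    have hfin : (2:ℝ) ^ (((i'a a : ℝ)) * εt) * (n * εt)
        ≤ (2:ℝ) ^ ((jstar:ℝ) * εt) * (n * εt) := by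
      apply mul_le_mul_of_nonneg_right hmono
      positivity
    calc w a * (2:ℝ) ^ (((i'a a : ℝ)) * εt) - w a * (2:ℝ) ^ (((ia a : ℝ)) * εt)
        = w a * ((2:ℝ) ^ (((i'a a : ℝ)) * εt) - (2:ℝ) ^ (((ia a : ℝ)) * εt)) := by ring
      _ ≤ w a * ((2:ℝ) ^ ((jstar:ℝ) * εt) * (n * εt)) := by
          apply mul_le_mul_of_nonneg_left (le_trans hstep hfin) hw.le
      _ = εt * (w a * n) * (2:ℝ) ^ ((jstar:ℝ) * εt) := by ring
  -- assemble
  have hswap : ∑ j ∈ Finset.range (jstar+1), d'' j * (2:ℝ) ^ ((j:ℝ) * εt)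
      = ∑ a : Fin s, ∑ j ∈ Finset.range (jstar+1), v a j * (2:ℝ) ^ ((j:ℝ) * εt) := by
    simp only [hd, Finset.sum_mul]
    exact Finset.sum_comm
  rw [hswap]
  calc ∑ a : Fin s, ∑ j ∈ Finset.range (jstar+1), v a j * (2:ℝ) ^ ((j:ℝ) * εt)
      = ∑ a : Fin s, (w a * (2:ℝ) ^ (((i'a a : ℝ)) * εt)
          - w a * (2:ℝ) ^ (((ia a : ℝ)) * εt)) := Finset.sum_congr rfl (fun a _ => hws a)
    _ ≤ ∑ a : Fin s, εt * (w a * ((i'a a : ℝ) - (ia a : ℝ))) * (2:ℝ) ^ ((jstar:ℝ) * εt) :=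
        Finset.sum_le_sum (fun a _ => hkey a)
    _ = εt * (2:ℝ) ^ ((jstar:ℝ) * εt) * ∑ a : Fin s, w a * ((i'a a : ℝ) - (ia a : ℝ)) := by
        rw [Finset.mul_sum]; exact Finset.sum_congr rfl (fun a _ => by ring)
    _ ≤ εt * (2:ℝ) ^ ((jstar:ℝ) * εt) * 40 := by
        apply mul_le_mul_of_nonneg_left hmass
        positivity
    _ = 40 * εt * (2:ℝ) ^ ((jstar:ℝ) * εt) := by ring
end
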